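/- Let V be the von Neumann universe V_κ for an uncountable strongly inaccessible cardinal κ, let Φ be a rule set based on V, and let λ ∈ V be a cardinal such that |P| ≤ λ for every rule (P, c) ∈ Φ. Then the closing ordinal of Φ is an element of V. -/

import Mathlib

universe u
variable {U : Type u}

/-- The operator associated to a rule set. -/
def RuleOp (Φ : Set (Set U × U)) (X : Set U) : Set U :=
  {c | ∃ P, (P, c) ∈ Φ ∧ P ⊆ X}

/-- A set is Φ-closed if it contains the conclusion of every rule whose premises it contains. -/
def RuleClosed (Φ : Set (Set U × U)) (X : Set U) : Prop :=
  ∀ P c, (P, c) ∈ Φ → P ⊆ X → c ∈ X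

/-- The least Φ-closed set: intersection of all Φ-closed sets. -/
def RuleLfp (Φ : Set (Set U × U)) : Set U :=
  ⋂₀ {X | RuleClosed Φ X}

/-- Transfinite iteration of the rule-set operator. -/
noncomputable def RuleIter (Φ : Set (Set U × U)) : Ordinal.{u} → Set U
  | α => ⋃ β : {β : Ordinal.{u} // β < α}, (RuleIter Φ β.1 ∪ RuleOp Φ (RuleIter Φ β.1))
  termination_by α => α
  decreasing_by exact β.2

/-- The von Neumann hierarchy as a class of ZF sets: `Vclass α = ⋃_{β < α} 𝒫(Vclass β)`. -/
noncomputable def Vclass : Ordinal.{0} → Set ZFSet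
  | α => ⋃ β : {β : Ordinal.{0} // β < α}, {x : ZFSet | ∀ y ∈ x, y ∈ Vclass β.1}
  termination_by α => α
  decreasing_by exact β.2

lemma ruleIter_eq (Φ : Set (Set U × U)) (α : Ordinal.{u}) :
    RuleIter Φ α = ⋃ β : {β : Ordinal.{u} // β < α},
      (RuleIter Φ β.1 ∪ RuleOp Φ (RuleIter Φ β.1)) := by
  rw [RuleIter]

lemma ruleOp_mono (Φ : Set (Set U × U)) {X Y : Set U} (h : X ⊆ Y) :
    RuleOp Φ X ⊆ RuleOp Φ Y := by
  rintro c ⟨P, hP, hPX⟩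
  exact ⟨P, hP, hPX.trans h⟩

lemma ruleIter_mono (Φ : Set (Set U × U)) {β α : Ordinal.{u}} (h : β ≤ α) :
    RuleIter Φ β ⊆ RuleIter Φ α := by
  rw [ruleIter_eq Φ β, ruleIter_eq Φ α]
  refine Set.iUnion_subset fun γ => ?_
  exact Set.subset_iUnion_of_subset ⟨γ.1, lt_of_lt_of_le γ.2 h⟩ subset_rfl

lemma ruleIter_subset_op (Φ : Set (Set U × U)) (α : Ordinal.{u}) :
    RuleIter Φ α ⊆ RuleOp Φ (RuleIter Φ α) := by
  induction α using Ordinal.induction with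
  | h α ih =>
    conv_lhs => rw [ruleIter_eq Φ α]
    refine Set.iUnion_subset fun β => Set.union_subset ?_ ?_
    · exact (ih β.1 β.2).trans (ruleOp_mono Φ (ruleIter_mono Φ β.2.le))
    · exact ruleOp_mono Φ (ruleIter_mono Φ β.2.le)

lemma mem_ruleIter_succ (Φ : Set (Set U × U)) {β α : Ordinal.{u}} (h : β < α) :
    RuleIter Φ β ∪ RuleOp Φ (RuleIter Φ β) ⊆ RuleIter Φ α := by
  rw [ruleIter_eq Φ α]
  exact Set.subset_iUnion
    (fun γ : {γ : Ordinal.{u} // γ < α} => RuleIter Φ γ.1 ∪ RuleOp Φ (RuleIter Φ γ.1)) ⟨β, h⟩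

theorem closing_ordinal_mem_V (κ : Cardinal.{0})
    (huncount : Cardinal.aleph0 < κ) (hreg : κ.IsRegular) (hsl : κ.IsStrongLimit)
    (Φ : Set (Set ZFSet × ZFSet))
    (hbase : ∀ P c, (P, c) ∈ Φ → P ⊆ Vclass κ.ord ∧ c ∈ Vclass κ.ord)
    (lam : Cardinal.{0}) (hlamV : lam < κ)
    (hcard : ∀ P c, (P, c) ∈ Φ → Cardinal.mk P ≤ Cardinal.lift.{1} lam) :
    ∃ α : Ordinal.{1},
      RuleOp Φ (RuleIter Φ α) = RuleIter Φ α ∧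
      (∀ β : Ordinal.{1}, RuleOp Φ (RuleIter Φ β) = RuleIter Φ β → α ≤ β) ∧
      α < Ordinal.lift.{1} κ.ord := by
  -- the candidate cardinal
  set ν : Cardinal.{0} := Order.succ (lam ⊔ Cardinal.aleph0) with hν
  have hν0 : Cardinal.aleph0 ≤ lam ⊔ Cardinal.aleph0 := le_sup_right
  have hνreg : (Cardinal.lift.{1} ν).IsRegular := by
    have h := Cardinal.isRegular_succ hν0
    constructor
    · rw [← Cardinal.lift_aleph0.{1,0}]
      exact Cardinal.lift_le.2 h.1
    · rw [← Cardinal.lift_ord, ← Ordinal.lift_cof]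
      exact Cardinal.lift_le.2 h.2
  have hνκ : ν < κ := by
    have h1 : lam ⊔ Cardinal.aleph0 < κ := sup_lt_iff.2 ⟨hlamV, huncount⟩
    calc ν ≤ 2 ^ (lam ⊔ Cardinal.aleph0) :=
          Order.succ_le_of_lt (Cardinal.cantor _)
      _ < κ := hsl.2 h1
  set μ : Ordinal.{1} := Ordinal.lift.{1} ν.ord with hμ
  have hμκ : μ < Ordinal.lift.{1} κ.ord :=
    Ordinal.lift_lt.2 (Cardinal.ord_lt_ord.2 hνκ)
  have hμord : μ = (Cardinal.lift.{1} ν).ord := Cardinal.lift_ord ν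
  have hμlim : Order.IsSuccLimit μ := by
    rw [hμord]
    exact Cardinal.isSuccLimit_ord (by simpa using (hν0.trans (Order.le_succ _)))
  -- μ is a fixed point
  have hfix : RuleOp Φ (RuleIter Φ μ) ⊆ RuleIter Φ μ := by
    rintro c ⟨P, hPΦ, hPsub⟩
    -- for each x in P pick a stage
    have hx : ∀ x : P, ∃ β : Ordinal.{1}, β < μ ∧ (x : ZFSet) ∈ RuleIter Φ β := by
      rintro ⟨x, hxP⟩
      have := hPsub hxP
      rw [ruleIter_eq Φ μ] at this
      obtain ⟨S, ⟨⟨β, hβ⟩, rfl⟩, hxS⟩ := this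
      exact ⟨β + 1, hμlim.succ_lt hβ, mem_ruleIter_succ Φ (Order.lt_succ β) hxS⟩
    choose f hf1 hf2 using hx
    by_cases hPe : Nonempty P
    · have hsup : iSup f < μ := by
        rw [hμord]
        refine Cardinal.iSup_lt_ord_of_isRegular hνreg ?_ (fun i => hμord ▸ hf1 i)
        calc (Cardinal.mk P) ≤ Cardinal.lift.{1} lam := hcard P c hPΦ
          _ ≤ Cardinal.lift.{1} (lam ⊔ Cardinal.aleph0) := Cardinal.lift_le.2 le_sup_left
          _ < Cardinal.lift.{1} ν := Cardinal.lift_lt.2 (Order.lt_succ _)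
      have hPsub' : P ⊆ RuleIter Φ (iSup f) := by
        intro x hxP
        exact ruleIter_mono Φ (le_ciSup (Ordinal.bddAbove_range.{1,1} f) ⟨x, hxP⟩) (hf2 ⟨x, hxP⟩)
      have : c ∈ RuleOp Φ (RuleIter Φ (iSup f)) := ⟨P, hPΦ, hPsub'⟩
      exact mem_ruleIter_succ Φ hsup (Or.inr this)
    · -- P is empty
      have hPsub' : P ⊆ RuleIter Φ 0 := by
        intro x hxP; exact absurd ⟨⟨x, hxP⟩⟩ hPe
      have : c ∈ RuleOp Φ (RuleIter Φ (0 : Ordinal.{1})) := ⟨P, hPΦ, hPsub'⟩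
      exact mem_ruleIter_succ Φ hμlim.pos (Or.inr this)
  have hfixμ : RuleOp Φ (RuleIter Φ μ) = RuleIter Φ μ :=
    le_antisymm hfix (ruleIter_subset_op Φ μ)
  -- take the least fixed ordinal
  set S : Set Ordinal.{1} := {α | RuleOp Φ (RuleIter Φ α) = RuleIter Φ α} with hS
  have hSne : S.Nonempty := ⟨μ, hfixμ⟩
  refine ⟨sInf S, csInf_mem hSne, fun β hβ => csInf_le' hβ, ?_⟩
  exact lt_of_le_of_lt (csInf_le' hfixμ) hμκ
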